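/- Let n ≥ 1, let m ≥ 2 be an integer, let C be a ℤ-submodule of (ℤ/mℤ)^n, and let C^⊥ = {y ∈ (ℤ/mℤ)^n : ∑_{i=1}^n yᵢxᵢ = 0 for all x ∈ C} be its dual code. Then for every real q with 0 ≤ q < 1, ∑_{x ∈ Λ_A(C^⊥)} q^{‖x‖₁} = ((1 - q²)^n / |C|) · ∑_{c ∈ C} ∏_{i=1}^n 1/(q² − 2q·cos(2π c̄ᵢ / m) + 1), where c̄ᵢ ∈ {0, 1, …, m−1} denotes the integer representative of the coordinate cᵢ ∈ ℤ/mℤ and Λ_A(C^⊥) = {x ∈ ℤ^n : (x mod m) ∈ C^⊥}. -/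

import Mathlib

open Complex

noncomputable section ThetaAux

variable {m : ℕ}

def Ec (m : ℕ) (a : ZMod m) : ℂ := Complex.exp (2 * Real.pi * I / m) ^ a.val

lemma Ec_root (hm : m ≠ 0) : Complex.exp (2 * Real.pi * I / m) ^ m = 1 :=
  (Complex.isPrimitiveRoot_exp m hm).pow_eq_one

lemma Ec_pow_mod (hm : m ≠ 0) (j : ℕ) :
    Complex.exp (2 * Real.pi * I / m) ^ j
      = Complex.exp (2 * Real.pi * I / m) ^ (j % m) := by
  conv_lhs => rw [← Nat.div_add_mod j m]
  rw [pow_add, pow_mul, Ec_root hm, one_pow, one_mul]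

lemma Ec_zero [NeZero m] : Ec m 0 = 1 := by simp [Ec, ZMod.val_zero]

lemma Ec_add [NeZero m] (a b : ZMod m) : Ec m (a + b) = Ec m a * Ec m b := by
  rw [Ec, Ec, Ec, ZMod.val_add, ← Ec_pow_mod (NeZero.ne m), pow_add]

lemma Ec_ne_zero (a : ZMod m) : Ec m a ≠ 0 := pow_ne_zero _ (Complex.exp_ne_zero _)

lemma Ec_neg [NeZero m] (a : ZMod m) : Ec m (-a) = (Ec m a)⁻¹ := by
  have h : Ec m a * Ec m (-a) = 1 := by rw [← Ec_add]; simp [Ec_zero]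
  exact eq_inv_of_mul_eq_one_left (by rw [mul_comm]; exact h)

lemma Ec_sum [NeZero m] {ι : Type*} (s : Finset ι) (f : ι → ZMod m) :
    Ec m (∑ i ∈ s, f i) = ∏ i ∈ s, Ec m (f i) := by
  classical
  induction s using Finset.cons_induction with
  | empty => simp [Ec_zero]
  | cons i s his ih =>
      rw [Finset.sum_cons, Finset.prod_cons, Ec_add, ih]

lemma Ec_zpow [NeZero m] (x : ℤ) (a : ZMod m) :
    Ec m ((x : ZMod m) * a) = Ec m a ^ x := by
  induction x using Int.induction_on with
  | zero => simp [Ec_zero]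
  | succ k ih =>
      have : (((k : ℤ) + 1 : ℤ) : ZMod m) * a = (k : ℤ) * a + a := by push_cast; ring
      rw [this, Ec_add, ih, zpow_add_one₀ (Ec_ne_zero a)]
  | pred k ih =>
      have h2 : ((-(k : ℤ) - 1 : ℤ) : ZMod m) * a = ((-(k : ℤ) : ℤ) : ZMod m) * a + (-a) := by
        push_cast; ring
      rw [h2, Ec_add, ih, Ec_neg, zpow_sub_one₀ (Ec_ne_zero a)]

lemma Ec_eq_one_iff (hm : m ≠ 0) (a : ZMod m) : Ec m a = 1 ↔ a = 0 := by
  haveI : NeZero m := ⟨hm⟩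
  rw [Ec, (Complex.isPrimitiveRoot_exp m hm).pow_eq_one_iff_dvd]
  constructor
  · intro h
    have := ZMod.val_lt a
    exact (ZMod.val_eq_zero a).mp (Nat.eq_zero_of_dvd_of_lt h this)
  · rintro rfl; simp [ZMod.val_zero]

lemma Ec_norm (a : ZMod m) : ‖Ec m a‖ = 1 := by
  rw [Ec, norm_pow]
  have : 2 * Real.pi * I / m = ((2 * Real.pi / m : ℝ) : ℂ) * I := by push_cast; ring
  rw [this, Complex.norm_exp_ofReal_mul_I, one_pow]

open scoped Classical in
lemma orth {n m : ℕ} (hm : m ≠ 0) (C : Submodule ℤ (Fin n → ZMod m)) [Fintype C]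
    (x : Fin n → ℤ) :
    ∑ c : C, Ec m (∑ i, ((x i : ZMod m) * (c : Fin n → ZMod m) i))
      = if (∀ z ∈ C, ∑ i, ((x i : ℤ) : ZMod m) * z i = 0) then (Fintype.card C : ℂ) else 0 := by
  haveI : NeZero m := ⟨hm⟩
  classical
  by_cases hx : ∀ z ∈ C, ∑ i, ((x i : ℤ) : ZMod m) * z i = 0
  · rw [if_pos hx]
    rw [Finset.sum_congr rfl (fun c _ => by rw [hx c c.2, Ec_zero])]
    simp
  · rw [if_neg hx]
    push_neg at hx
    obtain ⟨z0, hz0C, hz0⟩ := hx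
    set c0 : C := ⟨z0, hz0C⟩ with hc0
    set φ : C → ZMod m := fun c => ∑ i, ((x i : ZMod m) * (c : Fin n → ZMod m) i) with hφ
    have hadd : ∀ c : C, φ (c + c0) = φ c + φ c0 := by
      intro c
      simp only [hφ, Submodule.coe_add, Pi.add_apply, mul_add, Finset.sum_add_distrib]
    have ht : Ec m (φ c0) ≠ 1 := by
      exact fun h => hz0 ((Ec_eq_one_iff hm _).mp h)
    have hshift : (∑ c : C, Ec m (φ c)) * Ec m (φ c0) = ∑ c : C, Ec m (φ c) := by
      rw [Finset.sum_mul]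
      refine Fintype.sum_equiv (Equiv.addRight c0) _ _ (fun c => ?_)
      rw [← Ec_add, ← hadd]
      rfl
    have := mul_eq_zero.mp (by linear_combination hshift :
      (∑ c : C, Ec m (φ c)) * (Ec m (φ c0) - 1) = 0)
    exact this.resolve_right (sub_ne_zero.2 ht)

lemma pi_tsum_prod : ∀ (n : ℕ) (g : Fin n → ℤ → ℂ),
    (∀ i, Summable fun k => ‖g i k‖) →
    Summable (fun x : Fin n → ℤ => ‖∏ i, g i (x i)‖) ∧
      ∑' x : Fin n → ℤ, ∏ i, g i (x i) = ∏ i, ∑' k, g i k := by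
  intro n
  induction n with
  | zero =>
      intro g _
      refine ⟨Summable.of_finite, ?_⟩
      haveI : Unique (Fin 0 → ℤ) := ⟨⟨fun i => i.elim0⟩, fun f => funext fun i => i.elim0⟩
      rw [tsum_eq_single (default : Fin 0 → ℤ) (fun b hb => absurd (Subsingleton.elim b default) hb)]
      simp
  | succ n ih =>
      intro g hg
      obtain ⟨hGs, hGt⟩ := ih (fun i => g i.succ) (fun i => hg i.succ)
      set G : (Fin n → ℤ) → ℂ := fun y => ∏ i, g i.succ (y i) with hGdef
      have h0 : Summable fun k => ‖g 0 k‖ := hg 0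
      have hpair : Summable (fun p : ℤ × (Fin n → ℤ) => ‖g 0 p.1 * G p.2‖) := by
        have := summable_mul_of_summable_norm (R := ℝ)
          (f := fun k : ℤ => ‖g 0 k‖) (g := fun y : Fin n → ℤ => ‖G y‖)
          (h0.congr fun k => (Real.norm_of_nonneg (norm_nonneg _)).symm)
          (hGs.congr fun y => (Real.norm_of_nonneg (norm_nonneg _)).symm)
        exact this.congr fun p => (norm_mul _ _).symm
      set e : ℤ × (Fin n → ℤ) ≃ (Fin (n+1) → ℤ) :=
        Fin.consEquiv (fun _ : Fin (n+1) => ℤ) with he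
      have hcomp : ∀ p : ℤ × (Fin n → ℤ),
          ∏ i, g i ((e p) i) = g 0 p.1 * G p.2 := by
        intro p
        rw [Fin.prod_univ_succ]
        simp [he, Fin.consEquiv, G]
      constructor
      · exact e.summable_iff.mp
          (hpair.congr fun p => (congrArg norm (hcomp p)).symm)
      · calc ∑' x : Fin (n+1) → ℤ, ∏ i, g i (x i)
            = ∑' p : ℤ × (Fin n → ℤ), ∏ i, g i ((e p) i) := (e.tsum_eq _).symm
          _ = ∑' p : ℤ × (Fin n → ℤ), g 0 p.1 * G p.2 := tsum_congr hcomp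
          _ = (∑' k, g 0 k) * ∑' y, G y :=
              (tsum_mul_tsum_of_summable_norm h0 hGs).symm
          _ = ∏ i, ∑' k, g i k := by rw [hGt, Fin.prod_univ_succ]

lemma denom_pos {q : ℝ} (hq0 : 0 ≤ q) (hq1 : q < 1) (θ : ℝ) :
    0 < q ^ 2 - 2 * q * Real.cos θ + 1 := by
  nlinarith [Real.cos_le_one θ, Real.neg_one_le_cos θ, sq_nonneg (1 - q), sq_nonneg (1 + q),
    mul_nonneg hq0 (sub_nonneg.2 (Real.cos_le_one θ))]

lemma geom_eval {q : ℝ} (hq0 : 0 ≤ q) (hq1 : q < 1) (θ : ℝ) :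
    ∑' k : ℤ, ((q : ℂ) ^ k.natAbs * Complex.exp (θ * I) ^ k)
      = (((1 - q ^ 2) / (q ^ 2 - 2 * q * Real.cos θ + 1) : ℝ) : ℂ) := by
  set z : ℂ := Complex.exp (θ * I) with hz
  have hznorm : ‖z‖ = 1 := by
    rw [hz, Complex.norm_exp_ofReal_mul_I]
  have hz0 : z ≠ 0 := Complex.exp_ne_zero _
  have hqz : ‖(q : ℂ) * z‖ < 1 := by
    rw [norm_mul, hznorm, mul_one, Complex.norm_real, Real.norm_of_nonneg hq0]; exact hq1
  have hqzi : ‖(q : ℂ) * z⁻¹‖ < 1 := by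
    rw [norm_mul, norm_inv, hznorm, inv_one, mul_one, Complex.norm_real,
      Real.norm_of_nonneg hq0]; exact hq1
  have hqz1 : 1 - (q : ℂ) * z ≠ 0 := by
    intro h
    have := hqz
    rw [show (q : ℂ) * z = 1 from by linear_combination -h] at this
    simp at this
  have hqzi1 : 1 - (q : ℂ) * z⁻¹ ≠ 0 := by
    intro h
    have := hqzi
    rw [show (q : ℂ) * z⁻¹ = 1 from by linear_combination -h] at this
    simp at this
  have hs1 : Summable fun k : ℕ => ((q : ℂ) * z) ^ k := summable_geometric_of_norm_lt_one hqz
  have hs2 : Summable fun k : ℕ => ((q : ℂ) * z⁻¹) ^ k := summable_geometric_of_norm_lt_one hqzi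
  have hf1 : ∀ k : ℕ, (q : ℂ) ^ (k : ℤ).natAbs * z ^ (k : ℤ) = ((q : ℂ) * z) ^ k := by
    intro k; rw [Int.natAbs_natCast, zpow_natCast, mul_pow]
  have hf2 : ∀ k : ℕ, (q : ℂ) ^ (-((k : ℤ) + 1)).natAbs * z ^ (-((k : ℤ) + 1))
      = ((q : ℂ) * z⁻¹) * ((q : ℂ) * z⁻¹) ^ k := by
    intro k
    have h1 : (-((k : ℤ) + 1)).natAbs = k + 1 := by omega
    have hcast : ((k + 1 : ℕ) : ℤ) = (k : ℤ) + 1 := by push_cast; ring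
    have h2 : z ^ (-((k : ℤ) + 1)) = (z⁻¹) ^ (k + 1) := by
      rw [zpow_neg, ← hcast, zpow_natCast, inv_pow]
    rw [h1, h2, ← mul_pow, pow_succ]; ring
  have hsum : ∑' k : ℤ, ((q : ℂ) ^ k.natAbs * z ^ k)
      = (∑' k : ℕ, ((q : ℂ) * z) ^ k) + ((q : ℂ) * z⁻¹) * ∑' k : ℕ, ((q : ℂ) * z⁻¹) ^ k := by
    rw [tsum_of_nat_of_neg_add_one (hs1.congr fun k => (hf1 k).symm)
      ((hs2.mul_left _).congr fun k => (hf2 k).symm)]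
    rw [tsum_congr hf1, tsum_congr hf2, tsum_mul_left]
  rw [hsum, tsum_geometric_of_norm_lt_one hqz, tsum_geometric_of_norm_lt_one hqzi]
  set c : ℂ := ((Real.cos θ : ℝ) : ℂ) with hc
  have hzw : z + z⁻¹ = 2 * c := by
    rw [hz, ← Complex.exp_neg, hc, Complex.ofReal_cos, Complex.two_cos, neg_mul]
  have hzz : z * z⁻¹ = 1 := mul_inv_cancel₀ hz0
  have hd : ((q ^ 2 - 2 * q * Real.cos θ + 1 : ℝ) : ℂ) ≠ 0 := by
    exact_mod_cast (denom_pos hq0 hq1 θ).ne'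
  have key : (1 - (q : ℂ) * z) * (1 - (q : ℂ) * z⁻¹) = (q : ℂ) ^ 2 - 2 * q * c + 1 := by
    linear_combination ((q : ℂ))^2 * hzz - (q : ℂ) * hzw
  have hdc : (q : ℂ) ^ 2 - 2 * q * c + 1 ≠ 0 := by
    rw [hc]
    intro h
    apply hd
    rw [← h]
    push_cast
    ring
  have hrhs : (((1 - q ^ 2) / (q ^ 2 - 2 * q * Real.cos θ + 1) : ℝ) : ℂ)
      = (1 - (q : ℂ) ^ 2) / ((q : ℂ) ^ 2 - 2 * q * c + 1) := by
    rw [hc]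
    push_cast
    ring
  rw [hrhs, eq_div_iff hdc, ← key]
  have e1 : (1 - (q:ℂ)*z)⁻¹ * (1 - (q:ℂ)*z) = 1 := inv_mul_cancel₀ hqz1
  have e2 : (1 - (q:ℂ)*z⁻¹)⁻¹ * (1 - (q:ℂ)*z⁻¹) = 1 := inv_mul_cancel₀ hqzi1
  linear_combination (1 - (q:ℂ)*z⁻¹) * e1 + (q:ℂ) * z⁻¹ * (1 - (q:ℂ)*z) * e2 - (q:ℂ)^2 * hzz

lemma Ec_exp {m : ℕ} (a : ZMod m) :
    Ec m a = Complex.exp (((2 * Real.pi * a.val / m : ℝ) : ℂ) * I) := by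
  rw [Ec, ← Complex.exp_nat_mul]
  congr 1
  push_cast
  ring

/-- Theorem: ℓ¹-theta function of the Construction A lattice of the dual code. -/
theorem theta_one_constructionA_dual
    (n m : ℕ) (hn : 1 ≤ n) (hm : 2 ≤ m)
    (C : Submodule ℤ (Fin n → ZMod m))
    (q : ℝ) (hq0 : 0 ≤ q) (hq1 : q < 1) :
    (∑' x : {x : Fin n → ℤ //
        ∀ z ∈ C, ∑ i, ((x i : ℤ) : ZMod m) * z i = 0},
        q ^ (∑ i, (x.val i).natAbs))
      = (1 - q ^ 2) ^ n / (Nat.card C : ℝ) *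
        ∑' c : C, ∏ i,
          1 / (q ^ 2 - 2 * q * Real.cos (2 * Real.pi *
              ((((c : Fin n → ZMod m)) i).val : ℝ) / (m : ℝ)) + 1) := by
  classical
  haveI : NeZero m := ⟨by omega⟩
  haveI : Fintype C := Fintype.ofFinite _
  have hm0 : m ≠ 0 := by omega
  set g : (Fin n → ZMod m) → Fin n → ℤ → ℂ :=
    fun v i k => (q : ℂ) ^ k.natAbs * Ec m (v i) ^ k with hg
  have hnorm : ∀ (a : ZMod m) (k : ℤ), ‖(q : ℂ) ^ k.natAbs * Ec m a ^ k‖ = q ^ k.natAbs := by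
    intro a k
    rw [norm_mul, norm_pow, norm_zpow, Ec_norm, one_zpow, mul_one, Complex.norm_real,
      Real.norm_of_nonneg hq0]
  have hsummZ : ∀ a : ZMod m, Summable fun k : ℤ => ‖(q : ℂ) ^ k.natAbs * Ec m a ^ k‖ := by
    intro a
    have hs : Summable fun k : ℤ => q ^ k.natAbs := by
      apply Summable.of_nat_of_neg
      · simpa using summable_geometric_of_lt_one hq0 hq1
      · simpa using summable_geometric_of_lt_one hq0 hq1
    exact hs.congr fun k => (hnorm a k).symm
  have hPi : ∀ v : Fin n → ZMod m,
      Summable (fun x : Fin n → ℤ => ‖∏ i, g v i (x i)‖) ∧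
        ∑' x : Fin n → ℤ, ∏ i, g v i (x i) = ∏ i, ∑' k, g v i k :=
    fun v => pi_tsum_prod n (g v) (fun i => hsummZ (v i))
  have hprod : ∀ (v : Fin n → ZMod m) (x : Fin n → ℤ),
      ∏ i, g v i (x i)
        = (q : ℂ) ^ (∑ i, (x i).natAbs) * Ec m (∑ i, ((x i : ZMod m) * v i)) := by
    intro v x
    rw [hg]
    rw [Finset.prod_mul_distrib, Finset.prod_pow_eq_pow_sum]
    congr 1
    rw [Ec_sum]
    exact Finset.prod_congr rfl fun i _ => (Ec_zpow (x i) (v i)).symm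
  set D : Set (Fin n → ℤ) := {x | ∀ z ∈ C, ∑ i, ((x i : ℤ) : ZMod m) * z i = 0} with hD
  have hcard0 : (Fintype.card C : ℂ) ≠ 0 := by
    exact_mod_cast Fintype.card_ne_zero (α := C)
  -- pointwise indicator identity
  have hind : ∀ x : Fin n → ℤ,
      D.indicator (fun x => (q : ℂ) ^ (∑ i, (x i).natAbs)) x
        = (Fintype.card C : ℂ)⁻¹ * ∑ c : C, ∏ i, g (c : Fin n → ZMod m) i (x i) := by
    intro x
    have hsum : ∑ c : C, ∏ i, g (c : Fin n → ZMod m) i (x i)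
        = (q : ℂ) ^ (∑ i, (x i).natAbs) *
          (if (∀ z ∈ C, ∑ i, ((x i : ℤ) : ZMod m) * z i = 0)
            then (Fintype.card C : ℂ) else 0) := by
      rw [show (∑ c : C, ∏ i, g (c : Fin n → ZMod m) i (x i))
          = ∑ c : C, ((q : ℂ) ^ (∑ i, (x i).natAbs) *
              Ec m (∑ i, ((x i : ZMod m) * (c : Fin n → ZMod m) i))) from
            Finset.sum_congr rfl fun c _ => hprod _ x,
        ← Finset.mul_sum, orth hm0 C x]
      congr
    by_cases hxD : x ∈ D
    · have hxD' : (∀ z ∈ C, ∑ i, ((x i : ℤ) : ZMod m) * z i = 0) := hxD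
      rw [Set.indicator_of_mem hxD, hsum, if_pos hxD']
      field_simp
    · have hxD' : ¬(∀ z ∈ C, ∑ i, ((x i : ℤ) : ZMod m) * z i = 0) := hxD
      rw [Set.indicator_of_notMem hxD, hsum, if_neg hxD']
      ring
  -- geometric evaluation per coordinate
  have hgeom : ∀ (v : Fin n → ZMod m) (i : Fin n),
      ∑' k : ℤ, g v i k
        = (((1 - q ^ 2) / (q ^ 2 - 2 * q * Real.cos (2 * Real.pi * ((v i).val : ℝ) / m) + 1) : ℝ) : ℂ) := by
    intro v i
    have := geom_eval hq0 hq1 (2 * Real.pi * ((v i).val : ℝ) / m)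
    rw [← this]
    refine tsum_congr fun k => ?_
    simp only [hg, Ec_exp]
  -- main chain over ℂ
  apply Complex.ofReal_injective
  calc ((∑' x : {x : Fin n → ℤ //
        ∀ z ∈ C, ∑ i, ((x i : ℤ) : ZMod m) * z i = 0},
        q ^ (∑ i, (x.val i).natAbs) : ℝ) : ℂ)
      = ∑' x : D, (q : ℂ) ^ (∑ i, ((x : Fin n → ℤ) i).natAbs) := by
        rw [Complex.ofReal_tsum]
        exact tsum_congr fun x => by push_cast; rfl
    _ = ∑' x : Fin n → ℤ, D.indicator (fun x => (q : ℂ) ^ (∑ i, (x i).natAbs)) x :=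
        tsum_subtype D (fun y => (q : ℂ) ^ (∑ i, (y i).natAbs))
    _ = ∑' x : Fin n → ℤ, (Fintype.card C : ℂ)⁻¹ *
          ∑ c : C, ∏ i, g (c : Fin n → ZMod m) i (x i) := tsum_congr hind
    _ = (Fintype.card C : ℂ)⁻¹ *
          ∑' x : Fin n → ℤ, ∑ c : C, ∏ i, g (c : Fin n → ZMod m) i (x i) := tsum_mul_left
    _ = (Fintype.card C : ℂ)⁻¹ *
          ∑ c : C, ∑' x : Fin n → ℤ, ∏ i, g (c : Fin n → ZMod m) i (x i) := by
        congr 1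
        exact Summable.tsum_finsetSum (fun c _ => ((hPi (c : Fin n → ZMod m)).1).of_norm)
    _ = (Fintype.card C : ℂ)⁻¹ *
          ∑ c : C, ∏ i, (((1 - q ^ 2) / (q ^ 2 - 2 * q * Real.cos (2 * Real.pi *
              (((c : Fin n → ZMod m) i).val : ℝ) / m) + 1) : ℝ) : ℂ) := by
        refine congrArg _ (Finset.sum_congr rfl fun c _ => ?_)
        rw [(hPi (c : Fin n → ZMod m)).2]
        exact Finset.prod_congr rfl fun i _ => hgeom _ i
    _ = (((1 - q ^ 2) ^ n / (Nat.card C : ℝ) *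
        ∑' c : C, ∏ i,
          1 / (q ^ 2 - 2 * q * Real.cos (2 * Real.pi *
              ((((c : Fin n → ZMod m)) i).val : ℝ) / (m : ℝ)) + 1) : ℝ) : ℂ) := by
        rw [tsum_fintype, Nat.card_eq_fintype_card]
        push_cast
        rw [Finset.mul_sum, Finset.mul_sum]
        refine Finset.sum_congr rfl fun c _ => ?_
        rw [Finset.prod_div_distrib, Finset.prod_const, Finset.card_univ, Fintype.card_fin]
        rw [Finset.prod_div_distrib, Finset.prod_const_one]
        ring
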